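/- If G is edge-critical, S ⊆ V(G) destabilises G, and v ∈ V(G) \ S, then S ∩ V(G_v) destabilises G_v. -/

import Mathlib

open SimpleGraph

/-- The independence number of a graph. -/
noncomputable def indepNum {V : Type} (G : SimpleGraph V) : ℕ :=
  sSup {n : ℕ | ∃ s : Set V, s.Finite ∧ s.ncard = n ∧ ∀ a ∈ s, ∀ b ∈ s, ¬ G.Adj a b}

/-- The number of edges of a graph. -/
noncomputable def numEdges {V : Type} (G : SimpleGraph V) : ℕ := G.edgeSet.ncard

/-- The degree (valency) of a vertex. -/
noncomputable def deg {V : Type} (G : SimpleGraph V) (v : V) : ℕ := (G.neighborSet v).ncard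

/-- The second valency `d²(v) = ∑_{w ∈ N(v)} d(w)`. -/
noncomputable def secondDeg {V : Type} (G : SimpleGraph V) (v : V) : ℕ :=
  ∑ᶠ w ∈ G.neighborSet v, deg G w

/-- `p = (a,b,c,d)` is an (ordered) 4-cycle of `G`. -/
def IsC4 {V : Type} (G : SimpleGraph V) (p : V × V × V × V) : Prop :=
  G.Adj p.1 p.2.1 ∧ G.Adj p.2.1 p.2.2.1 ∧ G.Adj p.2.2.1 p.2.2.2 ∧
    G.Adj p.2.2.2 p.1 ∧ p.1 ≠ p.2.2.1 ∧ p.2.1 ≠ p.2.2.2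

/-- The number of 4-cycles of `G`; each 4-cycle yields 8 ordered tuples. -/
noncomputable def numC4 {V : Type} (G : SimpleGraph V) : ℕ :=
  {p : V × V × V × V | IsC4 G p}.ncard / 8

/-- The number of 4-cycles of `G` containing a vertex of `S`. -/
noncomputable def numC4Through {V : Type} (G : SimpleGraph V) (S : Set V) : ℕ :=
  {p : V × V × V × V | IsC4 G p ∧ (p.1 ∈ S ∨ p.2.1 ∈ S ∨ p.2.2.1 ∈ S ∨ p.2.2.2 ∈ S)}.ncard / 8

/-- The invariant `ν(G) = 3e(G) − 17n(G) + 35α(G) + N(C₄;G)`. -/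
noncomputable def nu {V : Type} (G : SimpleGraph V) : ℤ :=
  3 * (numEdges G : ℤ) - 17 * (Nat.card V : ℤ) + 35 * (_root_.indepNum G : ℤ) + (numC4 G : ℤ)

/-- The closed neighbourhood `N[v]`. -/
def closedNbhd {V : Type} (G : SimpleGraph V) (v : V) : Set V := insert v (G.neighborSet v)

/-- `S` destabilises `G` : removing `S` decreases the independence number. -/
def Destab {V : Type} (G : SimpleGraph V) (S : Set V) : Prop :=
  _root_.indepNum (G.induce Sᶜ) < _root_.indepNum G

/-- `G` is edge-critical (α-critical): removing any edge increases the independence number. -/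
def EdgeCritical {V : Type} (G : SimpleGraph V) : Prop :=
  ∀ e ∈ G.edgeSet, _root_.indepNum G < _root_.indepNum (G.deleteEdges {e})


section IndepHelpers

variable {V : Type} [Finite V] (G : SimpleGraph V)

lemma indep_bddAbove :
    BddAbove {n : ℕ | ∃ s : Set V, s.Finite ∧ s.ncard = n ∧ ∀ a ∈ s, ∀ b ∈ s, ¬ G.Adj a b} := by
  refine ⟨Nat.card V, ?_⟩
  rintro n ⟨s, hs, rfl, -⟩
  exact le_trans (Set.ncard_le_ncard (Set.subset_univ s) Set.finite_univ)
    (le_of_eq (Set.ncard_univ V))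

lemma le_indepNum {s : Set V} (h : ∀ a ∈ s, ∀ b ∈ s, ¬ G.Adj a b) :
    s.ncard ≤ _root_.indepNum G :=
  le_csSup (indep_bddAbove G) ⟨s, s.toFinite, rfl, h⟩

lemma exists_max_indep :
    ∃ s : Set V, s.ncard = _root_.indepNum G ∧ ∀ a ∈ s, ∀ b ∈ s, ¬ G.Adj a b := by
  have h := Nat.sSup_mem (s := {n : ℕ | ∃ s : Set V, s.Finite ∧ s.ncard = n ∧
      ∀ a ∈ s, ∀ b ∈ s, ¬ G.Adj a b})
    ⟨0, ∅, Set.finite_empty, by simp, by simp⟩ (indep_bddAbove G)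
  obtain ⟨s, _, hc, hi⟩ := h
  exact ⟨s, hc, hi⟩

lemma exists_max_indep_mem (hec : EdgeCritical G) (v : V) :
    ∃ s : Set V, v ∈ s ∧ s.ncard = _root_.indepNum G ∧ ∀ a ∈ s, ∀ b ∈ s, ¬ G.Adj a b := by
  obtain ⟨I, hIc, hIi⟩ := exists_max_indep G
  by_cases hvI : v ∈ I
  · exact ⟨I, hvI, hIc, hIi⟩
  by_cases hadj : ∃ u ∈ I, G.Adj v u
  · obtain ⟨u, huI, hvu⟩ := hadj
    have he : s(v, u) ∈ G.edgeSet := hvu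
    have hlt := hec _ he
    obtain ⟨J, hJc, hJi⟩ := exists_max_indep (G.deleteEdges {s(v, u)})
    have hJadj : ∀ a ∈ J, ∀ b ∈ J, G.Adj a b → s(a, b) = s(v, u) := by
      intro a ha b hb hab
      by_contra hne
      exact hJi a ha b hb (by simp [deleteEdges_adj, hab, hne])
    have hvJ : v ∈ J ∧ u ∈ J := by
      by_contra hcon
      have : ∀ a ∈ J, ∀ b ∈ J, ¬ G.Adj a b := by
        intro a ha b hb hab
        have := hJadj a ha b hb hab
        rw [Sym2.eq_iff] at this
        rcases this with ⟨rfl, rfl⟩ | ⟨rfl, rfl⟩ <;>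
          first | exact hcon ⟨ha, hb⟩ | exact hcon ⟨hb, ha⟩
      have h1 : J.ncard ≤ _root_.indepNum G := le_indepNum G this
      omega
    obtain ⟨hvJ, huJ⟩ := hvJ
    refine ⟨J \ {u}, ⟨hvJ, fun h => hvu.ne (by simpa using h)⟩, ?_, ?_⟩
    · have hind : ∀ a ∈ J \ {u}, ∀ b ∈ J \ {u}, ¬ G.Adj a b := by
        rintro a ⟨ha, ha'⟩ b ⟨hb, hb'⟩ hab
        have := hJadj a ha b hb hab
        rw [Sym2.eq_iff] at this
        rcases this with ⟨rfl, rfl⟩ | ⟨rfl, rfl⟩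
        · exact hb' rfl
        · exact ha' rfl
      have h1 : (J \ {u}).ncard ≤ _root_.indepNum G := le_indepNum G hind
      have h2 : (J \ {u}).ncard = J.ncard - 1 :=
        Set.ncard_diff_singleton_of_mem huJ
      omega
    · rintro a ⟨ha, ha'⟩ b ⟨hb, hb'⟩ hab
      have := hJadj a ha b hb hab
      rw [Sym2.eq_iff] at this
      rcases this with ⟨rfl, rfl⟩ | ⟨rfl, rfl⟩
      · exact hb' rfl
      · exact ha' rfl
  · push_neg at hadj
    have hind : ∀ a ∈ insert v I, ∀ b ∈ insert v I, ¬ G.Adj a b := by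
      rintro a (rfl | ha) b (rfl | hb) hab
      · exact hab.ne rfl
      · exact hadj b hb hab
      · exact hadj a ha hab.symm
      · exact hIi a ha b hb hab
    have h1 : (insert v I).ncard ≤ _root_.indepNum G := le_indepNum G hind
    have h2 : (insert v I).ncard = I.ncard + 1 := Set.ncard_insert_of_notMem hvI I.toFinite
    omega

end IndepHelpers

/-- If `G` is edge-critical, `S` destabilises `G` and `v ∉ S`, then `S ∩ V(G_v)`
destabilises `G_v`. -/
theorem stmt5 {V : Type} [Fintype V] (G : SimpleGraph V) (hec : EdgeCritical G)
    (S : Set V) (hS : Destab G S) (v : V) (hv : v ∉ S) :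
    Destab (G.induce (closedNbhd G v)ᶜ) {u | ↑u ∈ S} := by
  classical
  set H := G.induce (closedNbhd G v)ᶜ with hH
  set T : Set ↥(closedNbhd G v)ᶜ := {u | ↑u ∈ S} with hT
  -- Step 1: `_root_.indepNum (H.induce Tᶜ) + 1 ≤ _root_.indepNum (G.induce Sᶜ)`
  obtain ⟨A, hAc, hAi⟩ := exists_max_indep (H.induce Tᶜ)
  have hvS : v ∈ Sᶜ := hv
  set f : ↥Tᶜ → ↥Sᶜ := fun a => ⟨(↑↑a : V), a.2⟩ with hf
  have hfinj : Function.Injective f := by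
    intro a b hab
    rw [Subtype.ext_iff] at hab
    exact Subtype.val_injective (Subtype.val_injective hab)
  set B : Set ↥Sᶜ := insert ⟨v, hvS⟩ (f '' A) with hB
  have hnotCN : ∀ a : ↥Tᶜ, (↑↑a : V) ∉ closedNbhd G v := fun a => (↑a : ↥(closedNbhd G v)ᶜ).2
  have hvne : ∀ a : ↥Tᶜ, (↑↑a : V) ≠ v := by
    intro a h
    exact hnotCN a (by rw [h]; exact Set.mem_insert _ _)
  have hvnadj : ∀ a : ↥Tᶜ, ¬ G.Adj v ↑↑a := by
    intro a h
    exact hnotCN a (Set.mem_insert_of_mem _ h)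
  have hBi : ∀ a ∈ B, ∀ b ∈ B, ¬ (G.induce Sᶜ).Adj a b := by
    rintro a (rfl | ⟨a', ha', rfl⟩) b (rfl | ⟨b', hb', rfl⟩) hab
    · exact hab.ne rfl
    · exact hvnadj b' hab
    · exact hvnadj a' hab.symm
    · exact hAi a' ha' b' hb' hab
  have hcardB : B.ncard = A.ncard + 1 := by
    rw [hB, Set.ncard_insert_of_notMem, Set.ncard_image_of_injective _ hfinj]
    rintro ⟨a', _, ha'⟩
    exact hvne a' (congrArg Subtype.val ha')
  have h1 : _root_.indepNum (H.induce Tᶜ) + 1 ≤ _root_.indepNum (G.induce Sᶜ) := by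
    have := le_indepNum (G.induce Sᶜ) hBi
    omega
  -- Step 2: `_root_.indepNum G ≤ _root_.indepNum H + 1`
  obtain ⟨I, hvI, hIc, hIi⟩ := exists_max_indep_mem G hec v
  set C : Set ↥(closedNbhd G v)ᶜ := {x | ↑x ∈ I} with hC
  have hCi : ∀ a ∈ C, ∀ b ∈ C, ¬ H.Adj a b := fun a ha b hb => hIi _ ha _ hb
  have himg : Subtype.val '' C = I \ {v} := by
    ext x
    constructor
    · rintro ⟨⟨x, hx⟩, hxI, rfl⟩
      refine ⟨hxI, fun h => hx ?_⟩
      have hxv : x = v := h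
      rw [hxv]
      exact Set.mem_insert _ _
    · rintro ⟨hxI, hxv⟩
      have hx : x ∈ (closedNbhd G v)ᶜ := by
        rintro (rfl | h)
        · exact hxv rfl
        · exact hIi v hvI x hxI h
      exact ⟨⟨x, hx⟩, hxI, rfl⟩
  have hcardC : C.ncard = I.ncard - 1 := by
    rw [← Set.ncard_image_of_injective C Subtype.val_injective, himg,
      Set.ncard_diff_singleton_of_mem hvI]
  have hI1 : 0 < I.ncard := (Set.ncard_pos I.toFinite).2 ⟨v, hvI⟩
  have h2 : _root_.indepNum G ≤ _root_.indepNum H + 1 := by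
    have := le_indepNum H hCi
    omega
  have h3 : _root_.indepNum (G.induce Sᶜ) < _root_.indepNum G := hS
  show _root_.indepNum (H.induce Tᶜ) < _root_.indepNum H
  omega
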